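/- Farkas' lemma for signed tropical numbers: for every matrix A ∈ 𝕋±^{d×n}, exactly one of the two sets nnker(A) and sep(A) is nonempty. -/

import Mathlib

/-!  Signed tropical numbers 𝕋±, the symmetrized tropical semiring 𝕊,
     and signed tropical convexity (Loho–Végh). -/

inductive SSign : Type where
  | pos : SSign
  | neg : SSign
  | bal : SSign
deriving DecidableEq

/-- The symmetrized tropical semiring 𝕊: the tropical zero 𝟘 = -∞ together with
elements `elem s r` where `s` is a sign (⊕, ⊖ or •) and `r` a real number. -/
inductive STrop : Type where
  | zero : STrop
  | elem : SSign → ℝ → STrop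

namespace STrop

/-- membership in the signed tropical numbers 𝕋± (i.e. not balanced-nonzero). -/
def isSigned : STrop → Prop
  | elem SSign.bal _ => False
  | _ => True

/-- membership in 𝕋≥, the nonnegative tropical numbers. -/
def nneg : STrop → Prop
  | zero => True
  | elem SSign.pos _ => True
  | _ => False

/-- membership in 𝕋≤, the nonpositive tropical numbers. -/
def npos : STrop → Prop
  | zero => True
  | elem SSign.neg _ => True
  | _ => False

/-- strictly positive signed element (sign ⊕, not 𝟘). -/
def isPos : STrop → Prop
  | elem SSign.pos _ => True
  | _ => False

/-- balanced or 𝟘 (membership in 𝕋•). -/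
def balZero : STrop → Prop
  | zero => True
  | elem SSign.bal _ => True
  | _ => False

/-- the negation map ⊖. -/
def neg : STrop → STrop
  | zero => zero
  | elem SSign.pos r => elem SSign.neg r
  | elem SSign.neg r => elem SSign.pos r
  | elem SSign.bal r => elem SSign.bal r

/-- tropical addition ⊕ on 𝕊. -/
noncomputable def add : STrop → STrop → STrop
  | zero, y => y
  | x, zero => x
  | elem s r, elem t u =>
    if r < u then elem t u
    else if u < r then elem s r
    else if s = t then elem s r
    else elem SSign.bal r

def signMul : SSign → SSign → SSign
  | SSign.pos, t => t
  | SSign.neg, SSign.pos => SSign.neg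
  | SSign.neg, SSign.neg => SSign.pos
  | SSign.neg, SSign.bal => SSign.bal
  | SSign.bal, _ => SSign.bal

/-- tropical multiplication ⊙ on 𝕊. -/
def mul : STrop → STrop → STrop
  | zero, _ => zero
  | _, zero => zero
  | elem s r, elem t u => elem (signMul s t) (r + u)

/-- a ⊖ b := a ⊕ (⊖b). -/
noncomputable def sub (x y : STrop) : STrop := add x (neg y)

/-- the tropical one, the signed element ⊕0. -/
def one : STrop := elem SSign.pos 0

/-- the absolute value |·| : 𝕊 → 𝕋≥. -/
def absS : STrop → STrop
  | zero => zero
  | elem _ r => elem SSign.pos r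

/-- strict order: x > y iff x ⊖ y is a strictly positive signed element. -/
def sgt (x y : STrop) : Prop := isPos (sub x y)

/-- balance relation: x ⋈ y iff x ⊖ y is balanced or 𝟘. -/
def bal (x y : STrop) : Prop := balZero (sub x y)

/-- the relation ⊵ : x ⊵ y iff x > y or x ⋈ y. -/
def teq (x y : STrop) : Prop := sgt x y ∨ bal x y

/-- the total order ≤ on the signed tropical numbers 𝕋±
(arbitrarily `False` whenever a balanced element is involved). -/
def sle : STrop → STrop → Prop
  | zero, zero => True
  | zero, elem SSign.pos _ => True
  | elem SSign.neg _, zero => True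
  | elem SSign.neg _, elem SSign.pos _ => True
  | elem SSign.pos r, elem SSign.pos u => r ≤ u
  | elem SSign.neg r, elem SSign.neg u => u ≤ r
  | _, _ => False

/-- U(a): the set of signed numbers incomparable with a; the singleton {a}
for signed a, and the order interval [⊖|a|, |a|] for balanced a. -/
def U : STrop → Set STrop
  | elem SSign.bal r => {x | isSigned x ∧ sle (elem SSign.neg r) x ∧ sle x (elem SSign.pos r)}
  | a => {a}

/-- tropical sum of finitely many elements of 𝕊. -/
noncomputable def sumFin : ∀ {n : ℕ}, (Fin n → STrop) → STrop
  | 0, _ => zero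
  | _ + 1, f => add (f 0) (sumFin fun i => f i.succ)

/-- matrix–vector product A ⊙ x over 𝕊. -/
noncomputable def mv {d n : ℕ} (A : Fin d → Fin n → STrop) (x : Fin n → STrop) : Fin d → STrop :=
  fun i => sumFin fun j => mul (A i j) (x j)

/-- vectors in 𝕋±^d. -/
def isSignedVec {d : ℕ} (v : Fin d → STrop) : Prop := ∀ i, isSigned (v i)

/-- the signed tropical convex hull of the columns of a matrix A:
tconv(A) = {z ∈ 𝕋±^d : z ⋈ A⊙x for some x ∈ 𝕋≥^n with ⊕_j x_j = 0}. -/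
def tconv {d n : ℕ} (A : Fin d → Fin n → STrop) : Set (Fin d → STrop) :=
  {z | isSignedVec z ∧ ∃ x : Fin n → STrop,
    (∀ j, nneg (x j)) ∧ sumFin x = one ∧ ∀ i, bal (z i) (mv A x i)}

/-- the signed tropical convex hull of an arbitrary set: the union of the hulls
of all finite collections of points of M. -/
def tconvSet {d : ℕ} (M : Set (Fin d → STrop)) : Set (Fin d → STrop) :=
  ⋃ (n : ℕ) (A : Fin d → Fin n → STrop) (_ : ∀ j, (fun i => A i j) ∈ M), tconv A

/-- a set M ⊆ 𝕋±^d is tropically convex iff M = tconv(M). -/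
def TropConvex {d : ℕ} (M : Set (Fin d → STrop)) : Prop := M = tconvSet M

/-- evaluation a ⊙ (0, x₁, …, x_d)ᵀ of an affine functional. -/
noncomputable def affEval {d : ℕ} (a : Fin (d + 1) → STrop) (x : Fin d → STrop) : STrop :=
  sumFin fun j => mul (a j) ((Fin.cons one x : Fin (d + 1) → STrop) j)

/-- the open signed tropical halfspace H⁺(a) = {x ∈ 𝕋±^d : a⊙(0,x)ᵀ > 𝟘}. -/
def Hopen {d : ℕ} (a : Fin (d + 1) → STrop) : Set (Fin d → STrop) :=
  {x | isSignedVec x ∧ sgt (affEval a x) zero}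

/-- the closed signed tropical halfspace H̄⁺(a) = {x ∈ 𝕋±^d : a⊙(0,x)ᵀ ⊵ 𝟘}. -/
def Hclosed {d : ℕ} (a : Fin (d + 1) → STrop) : Set (Fin d → STrop) :=
  {x | isSignedVec x ∧ teq (affEval a x) zero}

/-- the non-negative kernel nnker(A). -/
def nnker {d n : ℕ} (A : Fin d → Fin n → STrop) : Set (Fin n → STrop) :=
  {x | (∀ j, nneg (x j)) ∧ x ≠ (fun _ => zero) ∧ ∀ i, balZero (mv A x i)}

/-- the open tropical cone sep(A) = {y ∈ 𝕋±^d : yᵀ⊙A > 𝟘 componentwise}. -/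
def sep {d : ℕ} {J : Type} (A : Fin d → J → STrop) : Set (Fin d → STrop) :=
  {y | isSignedVec y ∧ ∀ j, isPos (sumFin fun i => mul (y i) (A i j))}

end STrop

namespace STrop
lemma add_zero' : ∀ x, add x zero = x := by intro x; cases x <;> rfl
lemma zero_add' : ∀ x, add zero x = x := by intro x; cases x <;> rfl

lemma add_comm' : ∀ x y, add x y = add y x := by
  intro x y
  cases x with
  | zero => cases y <;> simp [add_zero', zero_add']
  | elem s r =>
    cases y with
    | zero => rfl
    | elem t u =>
      simp only [add]
      rcases lt_trichotomy r u with h|h|h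
      · simp [h, not_lt.mpr h.le, h.ne']
      · subst h; simp only [lt_irrefl, if_false]
        by_cases hs : s = t
        · subst hs; simp
        · simp [hs, Ne.symm hs]
      · simp [h, not_lt.mpr h.le, h.ne']

lemma add_assoc' : ∀ x y z, add (add x y) z = add x (add y z) := by
  intro x y z
  cases x with
  | zero => simp [zero_add']
  | elem s r =>
  cases y with
  | zero => simp [add_zero', zero_add']
  | elem t u =>
  cases z with
  | zero => simp [add_zero', zero_add']
  | elem v w =>
    simp only [add]
    split_ifs <;> simp only [add] <;> split_ifs <;>
      first
        | rfl
        | (exfalso; linarith)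
        | simp_all
        | (exfalso; simp_all)

lemma signMul_assoc : ∀ a b c, signMul (signMul a b) c = signMul a (signMul b c) := by
  intro a b c; cases a <;> cases b <;> cases c <;> rfl
lemma signMul_comm : ∀ a b, signMul a b = signMul b a := by
  intro a b; cases a <;> cases b <;> rfl

lemma mul_zero' : ∀ x, mul x zero = zero := by intro x; cases x <;> rfl
lemma zero_mul' : ∀ x, mul zero x = zero := by intro x; cases x <;> rfl

lemma mul_comm' : ∀ x y, mul x y = mul y x := by
  intro x y; cases x <;> cases y <;> simp [mul, signMul_comm, add_comm]

lemma mul_assoc' : ∀ x y z, mul (mul x y) z = mul x (mul y z) := by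
  intro x y z; cases x <;> cases y <;> cases z <;> simp [mul, signMul_assoc, add_assoc]

lemma one_mul' : ∀ x, mul one x = x := by
  intro x; cases x <;> simp [one, mul, signMul]

lemma mul_one' : ∀ x, mul x one = x := by
  intro x; rw [mul_comm', one_mul']

lemma left_distrib' : ∀ x y z, mul x (add y z) = add (mul x y) (mul x z) := by
  intro x y z
  cases x with
  | zero => simp [zero_mul', zero_add', add_zero']
  | elem s r =>
  cases y with
  | zero => simp [mul_zero', zero_add']
  | elem t u =>
  cases z with
  | zero => simp [mul_zero', add_zero']
  | elem v w =>
    simp only [add, mul]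
    rcases lt_trichotomy u w with h|h|h
    · simp [mul, h, not_lt.mpr h.le, h.ne']
    · subst h
      simp only [lt_irrefl, if_false, add_lt_add_iff_left]
      by_cases htv : t = v
      · subst htv; simp [mul]
      · simp only [htv, if_false, mul]
        by_cases hs : signMul s t = signMul s v
        · cases s <;> cases t <;> cases v <;> simp_all [signMul]
        · simp [hs]
          cases s <;> cases t <;> cases v <;> simp_all [signMul]
    · simp [mul, h, not_lt.mpr h.le, h.ne']

noncomputable instance : Add STrop := ⟨add⟩
noncomputable instance : Zero STrop := ⟨zero⟩
noncomputable instance : Mul STrop := ⟨mul⟩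
noncomputable instance : One STrop := ⟨one⟩

lemma add_def (x y : STrop) : x + y = add x y := rfl
lemma mul_def (x y : STrop) : x * y = mul x y := rfl
lemma zero_def : (0 : STrop) = zero := rfl
lemma one_def : (1 : STrop) = one := rfl

noncomputable instance : CommSemiring STrop where
  add_assoc := add_assoc'
  zero_add := zero_add'
  add_zero := add_zero'
  add_comm := add_comm'
  mul_assoc := mul_assoc'
  one_mul := one_mul'
  mul_one := mul_one'
  left_distrib := left_distrib'
  right_distrib := by
    intro x y z
    show mul (add x y) z = add (mul x z) (mul y z)
    rw [mul_comm' (add x y) z, left_distrib', mul_comm' z x, mul_comm' z y]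
  zero_mul := zero_mul'
  mul_zero := mul_zero'
  mul_comm := mul_comm'
  nsmul := nsmulRec
  npow := npowRec

example (x y z : STrop) : x * (y + z) * x = x*x*y + z*x*x := by ring

/-! predicates -/

lemma balZero_add {x y : STrop} (hx : balZero x) (hy : balZero y) : balZero (x + y) := by
  cases x with
  | zero => rwa [add_def, zero_add']
  | elem s r =>
    cases y with
    | zero => rwa [add_def, add_zero']
    | elem t u =>
      cases s <;> cases t <;> simp_all [balZero, add_def, add] <;> split_ifs <;> simp [balZero]

lemma balZero_mul {x y : STrop} (hy : balZero y) : balZero (x * y) := by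
  cases x with
  | zero => rw [mul_def, zero_mul']; trivial
  | elem s r =>
    cases y with
    | zero => rw [mul_def, mul_zero']; trivial
    | elem t u => cases t <;> simp_all [balZero, mul_def, mul] <;> cases s <;> simp [signMul, balZero]

lemma nneg_add {x y : STrop} (hx : nneg x) (hy : nneg y) : nneg (x + y) := by
  cases x with
  | zero => rwa [add_def, zero_add']
  | elem s r =>
    cases y with
    | zero => rwa [add_def, add_zero']
    | elem t u =>
      cases s <;> cases t <;> simp_all [nneg, add_def, add] <;> split_ifs <;> simp [nneg]

lemma nneg_mul {x y : STrop} (hx : nneg x) (hy : nneg y) : nneg (x * y) := by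
  cases x with
  | zero => rw [mul_def, zero_mul']; trivial
  | elem s r =>
    cases y with
    | zero => rw [mul_def, mul_zero']; trivial
    | elem t u => cases t <;> cases s <;> simp_all [nneg, mul_def, mul, signMul]

lemma isPos_add {x y : STrop} (hx : isPos x) (hy : isPos y) : isPos (x + y) := by
  cases x with
  | zero => simp_all [isPos]
  | elem s r =>
    cases y with
    | zero => simp_all [isPos]
    | elem t u =>
      cases s <;> cases t <;> simp_all [isPos, add_def, add] <;> split_ifs <;> simp [isPos]

lemma isPos_mul {x y : STrop} (hx : isPos x) (hy : isPos y) : isPos (x * y) := by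
  cases x <;> cases y <;> simp_all [isPos, mul_def, mul] <;>
    (rename_i s _ t _; cases s <;> cases t <;> simp_all [signMul, isPos])

lemma isPos_mul_nneg {x y : STrop} (hx : isPos x) (hy : nneg y) (hy0 : y ≠ 0) : isPos (x * y) := by
  cases y with
  | zero => exact absurd rfl hy0
  | elem t u =>
    cases t <;> simp_all [nneg]
    exact isPos_mul hx trivial

lemma add_eq_zero_iff {x y : STrop} : x + y = 0 ↔ x = 0 ∧ y = 0 := by
  constructor
  · intro h
    cases x with
    | zero => rw [add_def, zero_add'] at h; exact ⟨rfl, h⟩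
    | elem s r =>
      cases y with
      | zero => rw [add_def, add_zero'] at h; exact ⟨h, rfl⟩
      | elem t u =>
        exfalso; rw [add_def] at h; simp only [add, zero_def] at h
        split_ifs at h <;> simp_all
  · rintro ⟨rfl, rfl⟩; simp

lemma not_isPos_balZero {x : STrop} (h1 : isPos x) (h2 : balZero x) : False := by
  cases x with
  | zero => exact h1
  | elem s r => cases s <;> simp_all [isPos, balZero]

section sums
variable {J : Type} [Fintype J]

lemma balZero_sum {f : J → STrop} (h : ∀ j, balZero (f j)) : balZero (∑ j, f j) := by
  classical
  refine Finset.sum_induction f balZero (fun a b ha hb => balZero_add ha hb) trivial (fun j _ => h j)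

lemma nneg_sum {f : J → STrop} (h : ∀ j, nneg (f j)) : nneg (∑ j, f j) := by
  classical
  refine Finset.sum_induction f nneg (fun a b ha hb => nneg_add ha hb) trivial (fun j _ => h j)

lemma sum_eq_zero_forall {f : J → STrop} (h : ∑ j, f j = 0) : ∀ j, f j = 0 := by
  classical
  suffices H : ∀ s : Finset J, (∑ j ∈ s, f j) = 0 → ∀ j ∈ s, f j = 0 by
    exact fun j => H Finset.univ h j (Finset.mem_univ j)
  intro s
  induction s using Finset.induction_on with
  | empty => intro _ j hj; simp at hj
  | insert _ _ hns ih =>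
    rename_i a s
    intro hsum j hj
    rw [Finset.sum_insert hns, add_eq_zero_iff] at hsum
    rcases Finset.mem_insert.mp hj with rfl | hj
    · exact hsum.1
    · exact ih hsum.2 j hj

lemma isPos_sum {f : J → STrop} (h : ∀ j, isPos (f j) ∨ f j = 0) (hj : ∃ j, isPos (f j)) :
    isPos (∑ j, f j) := by
  classical
  obtain ⟨j0, hj0⟩ := hj
  have key : isPos (∑ j, f j) ∨ (∑ j, f j) = 0 := by
    refine Finset.sum_induction f (fun z => isPos z ∨ z = 0) ?_ (Or.inr rfl) (fun j _ => h j)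
    rintro a b (ha | rfl) (hb | rfl)
    · exact Or.inl (isPos_add ha hb)
    · rw [add_zero]; exact Or.inl ha
    · rw [zero_add]; exact Or.inl hb
    · rw [add_zero]; exact Or.inr rfl
  rcases key with k | k
  · exact k
  · rw [sum_eq_zero_forall k j0] at hj0; exact hj0.elim
end sums


/-! ## Bridge between `sumFin` and `Finset.sum` -/

lemma sumFin_eq : ∀ {n : ℕ} (f : Fin n → STrop), sumFin f = ∑ i, f i := by
  intro n
  induction n with
  | zero => intro f; simp [sumFin]; rfl
  | succ m ih =>
    intro f
    show add (f 0) (sumFin fun i => f i.succ) = _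
    rw [← add_def, ih, Fin.sum_univ_succ]

section main
variable {J : Type} [Fintype J]

def NNK {d : ℕ} (A : Fin d → J → STrop) : Prop :=
  ∃ x : J → STrop, (∀ j, nneg (x j)) ∧ (∃ j, x j ≠ 0) ∧ ∀ i, balZero (∑ j, A i j * x j)

def SEP {d : ℕ} (A : Fin d → J → STrop) : Prop :=
  ∃ y : Fin d → STrop, isSignedVec y ∧ ∀ j, isPos (∑ i, y i * A i j)

lemma not_NNK_and_SEP {d : ℕ} (A : Fin d → J → STrop) (h1 : NNK A) (h2 : SEP A) : False := by
  classical
  obtain ⟨x, hxn, ⟨j0, hj0⟩, hxb⟩ := h1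
  obtain ⟨y, -, hy⟩ := h2
  have hpos : isPos (∑ j, (∑ i, y i * A i j) * x j) := by
    refine isPos_sum (fun j => ?_) ⟨j0, ?_⟩
    · by_cases hx : x j = 0
      · exact Or.inr (by rw [hx, mul_zero])
      · exact Or.inl (isPos_mul_nneg (hy j) (hxn j) hx)
    · exact isPos_mul_nneg (hy j0) (hxn j0) hj0
  have heq : (∑ j, (∑ i, y i * A i j) * x j) = ∑ i, y i * ∑ j, A i j * x j := by
    simp_rw [Finset.sum_mul, Finset.mul_sum, mul_assoc]
    exact Finset.sum_comm
  have hbz : balZero (∑ j, (∑ i, y i * A i j) * x j) := by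
    rw [heq]
    exact balZero_sum (fun i => balZero_mul (hxb i))
  exact not_isPos_balZero hpos hbz

end main
/-! ## scalar threshold analysis -/

noncomputable def psi : STrop → ℝ
  | zero => 0
  | elem SSign.pos r => Real.exp r
  | elem SSign.neg r => -Real.exp r
  | elem SSign.bal _ => 0

noncomputable def phi (m : ℝ) : STrop :=
  if m = 0 then zero
  else if 0 < m then elem SSign.pos (Real.log m)
  else elem SSign.neg (Real.log (-m))

lemma isSigned_phi (m : ℝ) : isSigned (phi m) := by
  unfold phi; split_ifs <;> trivial

lemma psi_phi (m : ℝ) : psi (phi m) = m := by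
  unfold phi
  split_ifs with h1 h2
  · simp [psi, h1]
  · simp [psi, Real.exp_log h2]
  · have hm : 0 < -m := by
      rcases lt_trichotomy m 0 with h|h|h
      · linarith
      · exact absurd h h1
      · exact absurd h h2
    simp only [psi]
    rw [Real.exp_log hm]; ring

noncomputable def lo : STrop → ℝ → ℝ
  | zero, _ => 0
  | elem SSign.pos γ, β => -Real.exp (γ - β)
  | elem SSign.neg γ, β => Real.exp (γ - β)
  | elem SSign.bal γ, β => Real.exp (γ - β)

lemma add_self (x : STrop) : x + x = x := by
  rw [add_def]; cases x with
  | zero => rfl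
  | elem s r => simp [add]

lemma feasL (c : STrop) (β : ℝ) (z : STrop) (hz : isSigned z) (h : lo c β < psi z) :
    isPos (c + z * elem SSign.pos β) := by
  cases z with
  | zero =>
    rw [mul_def, zero_mul', ← zero_def, add_zero]
    cases c with
    | zero => simp [lo, psi] at h
    | elem s γ =>
      cases s
      · trivial
      · exfalso; simp only [lo, psi] at h; nlinarith [Real.exp_pos (γ - β)]
      · exfalso; simp only [lo, psi] at h; nlinarith [Real.exp_pos (γ - β)]
  | elem t v =>
    cases t with
    | bal => exact hz.elim
    | pos =>
      cases c with
      | zero => rw [← zero_def, zero_add]; trivial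
      | elem s γ =>
        cases s with
        | pos => exact isPos_add trivial trivial
        | neg =>
          have hv : γ < v + β := by
            simp only [lo, psi] at h
            have := Real.exp_lt_exp.mp h; linarith
          rw [mul_def]
          simp [mul, signMul, add_def, add, hv, isPos]
        | bal =>
          have hv : γ < v + β := by
            simp only [lo, psi] at h
            have := Real.exp_lt_exp.mp h; linarith
          rw [mul_def]
          simp [mul, signMul, add_def, add, hv, isPos]
    | neg =>
      cases c with
      | zero => exfalso; simp only [lo, psi] at h; nlinarith [Real.exp_pos v]
      | elem s γ =>
        cases s with
        | pos =>
          have hv : v + β < γ := by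
            simp only [lo, psi] at h
            have : Real.exp v < Real.exp (γ - β) := by linarith
            have := Real.exp_lt_exp.mp this; linarith
          rw [mul_def]
          simp [mul, signMul, add_def, add, hv, not_lt.mpr hv.le, isPos]
        | neg => exfalso; simp only [lo, psi] at h; nlinarith [Real.exp_pos v, Real.exp_pos (γ - β)]
        | bal => exfalso; simp only [lo, psi] at h; nlinarith [Real.exp_pos v, Real.exp_pos (γ - β)]

lemma feasR (c : STrop) (β : ℝ) (z : STrop) (hz : isSigned z) (h : psi z < -(lo c β)) :
    isPos (c + z * elem SSign.neg β) := by
  cases z with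
  | zero =>
    rw [mul_def, zero_mul', ← zero_def, add_zero]
    cases c with
    | zero => simp [lo, psi] at h
    | elem s γ =>
      cases s
      · trivial
      · exfalso; simp only [lo, psi] at h; nlinarith [Real.exp_pos (γ - β)]
      · exfalso; simp only [lo, psi] at h; nlinarith [Real.exp_pos (γ - β)]
  | elem t v =>
    cases t with
    | bal => exact hz.elim
    | neg =>
      cases c with
      | zero => rw [← zero_def, zero_add]; rw [mul_def]; simp [mul, signMul]; trivial
      | elem s γ =>
        cases s with
        | pos =>
          have : isPos ((elem SSign.neg v : STrop) * elem SSign.neg β) := by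
            rw [mul_def]; simp [mul, signMul]; trivial
          exact isPos_add trivial this
        | neg =>
          have hv : γ < v + β := by
            simp only [lo, psi] at h
            have : Real.exp (γ - β) < Real.exp v := by linarith
            have := Real.exp_lt_exp.mp this; linarith
          rw [mul_def]
          simp [mul, signMul, add_def, add, hv, isPos]
        | bal =>
          have hv : γ < v + β := by
            simp only [lo, psi] at h
            have : Real.exp (γ - β) < Real.exp v := by linarith
            have := Real.exp_lt_exp.mp this; linarith
          rw [mul_def]
          simp [mul, signMul, add_def, add, hv, isPos]
    | pos =>
      cases c with
      | zero => exfalso; simp only [lo, psi] at h; nlinarith [Real.exp_pos v]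
      | elem s γ =>
        cases s with
        | pos =>
          have hv : v + β < γ := by
            simp only [lo, psi] at h
            have h' : Real.exp v < Real.exp (γ - β) := by linarith
            have := Real.exp_lt_exp.mp h'; linarith
          rw [mul_def]
          simp [mul, signMul, add_def, add, hv, not_lt.mpr hv.le, isPos]
        | neg => exfalso; simp only [lo, psi] at h; nlinarith [Real.exp_pos v, Real.exp_pos (γ - β)]
        | bal => exfalso; simp only [lo, psi] at h; nlinarith [Real.exp_pos v, Real.exp_pos (γ - β)]

lemma feasB (c : STrop) (β : ℝ) (z : STrop) (hz : isSigned z) (hc : isPos c)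
    (h1 : lo c β < psi z) (h2 : psi z < -(lo c β)) :
    isPos (c + z * elem SSign.bal β) := by
  cases c with
  | zero => exact hc.elim
  | elem s γ =>
    cases s with
    | neg => exact hc.elim
    | bal => exact hc.elim
    | pos =>
      cases z with
      | zero => rw [mul_def, zero_mul', ← zero_def, add_zero]; trivial
      | elem t v =>
        cases t with
        | bal => exact hz.elim
        | pos =>
          have hv : v + β < γ := by
            simp only [lo, psi] at h2
            have h' : Real.exp v < Real.exp (γ - β) := by linarith
            have := Real.exp_lt_exp.mp h'; linarith
          rw [mul_def]
          simp [mul, signMul, add_def, add, hv, not_lt.mpr hv.le, isPos]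
        | neg =>
          have hv : v + β < γ := by
            simp only [lo, psi] at h1
            have : Real.exp v < Real.exp (γ - β) := by linarith
            have := Real.exp_lt_exp.mp this; linarith
          rw [mul_def]
          simp [mul, signMul, add_def, add, hv, not_lt.mpr hv.le, isPos]

lemma isPos_mul_posE {c : STrop} {β : ℝ} (h : isPos (c * elem SSign.pos β)) : isPos c := by
  cases c with
  | zero => rw [mul_def, zero_mul'] at h; exact h.elim
  | elem s γ => cases s <;> simp_all [mul_def, mul, signMul, isPos]

lemma self_pos {c : STrop} {β : ℝ}
    (h : isPos (c * elem SSign.pos β + c * elem SSign.pos β)) : isPos c := by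
  rw [add_self] at h
  exact isPos_mul_posE h

lemma isPos_add_elem {s t : SSign} {r u : ℝ} (h : isPos (elem s r + elem t u)) :
    (s = SSign.pos ∧ u < r) ∨ (t = SSign.pos ∧ r < u) ∨ (s = SSign.pos ∧ t = SSign.pos) := by
  rw [add_def] at h; simp only [add] at h
  rcases lt_trichotomy r u with hv|hv|hv
  · rw [if_pos hv] at h
    cases t <;> simp_all [isPos]
  · subst hv
    rw [if_neg (lt_irrefl r), if_neg (lt_irrefl r)] at h
    by_cases hst : s = t
    · subst hst; rw [if_pos rfl] at h; cases s <;> simp_all [isPos]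
    · rw [if_neg hst] at h; exact h.elim
  · rw [if_neg (by linarith), if_pos hv] at h
    cases s <;> simp_all [isPos]

lemma pair_lt (c₁ c₂ : STrop) (β₁ β₂ : ℝ)
    (h : isPos (c₁ * elem SSign.pos β₂ + c₂ * elem SSign.pos β₁)) :
    lo c₁ β₁ < -(lo c₂ β₂) := by
  cases c₁ with
  | zero =>
    rw [mul_def zero (elem SSign.pos β₂), zero_mul', ← zero_def, zero_add] at h
    have hp := isPos_mul_posE h
    cases c₂ with
    | zero => exact hp.elim
    | elem s γ =>
      cases s with
      | pos => simp only [lo, neg_neg]; positivity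
      | neg => exact hp.elim
      | bal => exact hp.elim
  | elem s₁ γ₁ =>
    cases c₂ with
    | zero =>
      rw [mul_def zero (elem SSign.pos β₁), zero_mul', ← zero_def, add_zero] at h
      have hp := isPos_mul_posE h
      cases s₁ with
      | pos => simp only [lo]; nlinarith [Real.exp_pos (γ₁ - β₁)]
      | neg => exact hp.elim
      | bal => exact hp.elim
    | elem s₂ γ₂ =>
      cases s₁ <;> cases s₂ <;>
      · simp only [mul_def, mul, signMul] at h
        have h' := isPos_add_elem h
        simp only [lo]
        rcases h' with ⟨e, hv⟩ | ⟨e, hv⟩ | ⟨e, e'⟩ <;>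
          first
            | exact absurd e (by decide)
            | exact absurd e' (by decide)
            | first
              | nlinarith [Real.exp_pos (γ₁ - β₁), Real.exp_pos (γ₂ - β₂)]
              | (have hx := Real.exp_lt_exp.mpr (show γ₂ - β₂ < γ₁ - β₁ by linarith)
                 nlinarith [Real.exp_pos (γ₁ - β₁), Real.exp_pos (γ₂ - β₂)])
              | (have hx := Real.exp_lt_exp.mpr (show γ₁ - β₁ < γ₂ - β₂ by linarith)
                 nlinarith [Real.exp_pos (γ₁ - β₁), Real.exp_pos (γ₂ - β₂)])
/-! ## Fourier–Motzkin elimination data -/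

def isL : STrop → Prop
  | elem SSign.pos _ => True
  | elem SSign.bal _ => True
  | _ => False

def isU : STrop → Prop
  | elem SSign.neg _ => True
  | elem SSign.bal _ => True
  | _ => False

def valS : STrop → ℝ
  | zero => 0
  | elem _ r => r

def Lower {J : Type} (b : J → STrop) : Type := {j : J // isL (b j)}
def Upper {J : Type} (b : J → STrop) : Type := {j : J // isU (b j)}
def Zcol {J : Type} (b : J → STrop) : Type := {j : J // b j = 0}
def EIdx {J : Type} (b : J → STrop) : Type := Zcol b ⊕ (Lower b × Upper b)

noncomputable instance {J : Type} [Fintype J] (b : J → STrop) : Fintype (Lower b) := by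
  classical
  unfold Lower
  infer_instance
noncomputable instance {J : Type} [Fintype J] (b : J → STrop) : Fintype (Upper b) := by
  classical
  unfold Upper
  infer_instance
noncomputable instance {J : Type} [Fintype J] (b : J → STrop) : Fintype (Zcol b) := by
  classical
  unfold Zcol
  infer_instance
noncomputable instance {J : Type} [Fintype J] (b : J → STrop) : Fintype (EIdx b) := by
  unfold EIdx
  infer_instance

noncomputable def elimA {d : ℕ} {J : Type} (B : Fin d → J → STrop) (b : J → STrop) :
    Fin d → EIdx b → STrop :=
  fun i m => match m with
    | .inl z => B i z.1
    | .inr (l, u) => B i l.1 * absS (b u.1) + B i u.1 * absS (b l.1)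

lemma isL_absS {x : STrop} (h : isL x) : absS x = elem SSign.pos (valS x) := by
  cases x with
  | zero => exact h.elim
  | elem s r => rfl

lemma isU_absS {x : STrop} (h : isU x) : absS x = elem SSign.pos (valS x) := by
  cases x with
  | zero => exact h.elim
  | elem s r => rfl

lemma nneg_absS (x : STrop) : nneg (absS x) := by cases x <;> trivial

lemma absS_ne_zero {x : STrop} (h : x ≠ 0) : absS x ≠ 0 := by
  cases x with
  | zero => exact absurd rfl h
  | elem s r => exact fun hc => STrop.noConfusion hc

lemma isL_ne_zero {x : STrop} (h : isL x) : x ≠ 0 := by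
  cases x with
  | zero => exact h.elim
  | elem s r => exact fun hc => STrop.noConfusion hc

lemma isU_ne_zero {x : STrop} (h : isU x) : x ≠ 0 := by
  cases x with
  | zero => exact h.elim
  | elem s r => exact fun hc => STrop.noConfusion hc

lemma mul_ne_zero' {x y : STrop} (hx : x ≠ 0) (hy : y ≠ 0) : x * y ≠ 0 := by
  cases x with
  | zero => exact absurd rfl hx
  | elem s r =>
    cases y with
    | zero => exact absurd rfl hy
    | elem t u => exact fun hc => STrop.noConfusion hc

lemma balZero_LU {p q : STrop} (hp : isL p) (hq : isU q) :
    balZero (p * absS q + q * absS p) := by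
  cases p with
  | zero => exact hp.elim
  | elem s r =>
    cases q with
    | zero => exact hq.elim
    | elem t u =>
      cases s <;> cases t <;>
        first
          | exact hp.elim
          | exact hq.elim
          | (simp only [absS, mul_def, mul, signMul, add_def, add]
             split_ifs <;> first | trivial | (exfalso; linarith))
section elimstep
variable {d : ℕ} {J : Type} [Fintype J]

lemma sum_dite_subtype {M : Type} [AddCommMonoid M] (p : J → Prop)
    [DecidablePred p] [Fintype {j // p j}] (g : ∀ j, p j → M) :
    (∑ j : J, if h : p j then g j h else 0) = ∑ s : {j // p j}, g s.1 s.2 := by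
  classical
  rw [← Finset.sum_filter_add_sum_filter_not Finset.univ p]
  rw [Finset.sum_eq_zero (fun j hj => dif_neg (Finset.mem_filter.mp hj).2), add_zero]
  rw [Finset.sum_subtype (p := p) (Finset.univ.filter p) (fun x => by simp) (fun j => if h : p j then g j h else 0)]
  exact Finset.sum_congr rfl (fun x _ => dif_pos x.2)

lemma SEP_elim (B : Fin d → J → STrop) (b : J → STrop) (h : SEP (elimA B b)) :
    ∃ (y : Fin d → STrop) (z : STrop), isSignedVec y ∧ isSigned z ∧
      ∀ j, isPos ((∑ i, y i * B i j) + z * b j) := by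
  classical
  obtain ⟨y, hysgn, hy⟩ := h
  set c : J → STrop := fun j => ∑ i, y i * B i j with hc
  have hZ : ∀ z : Zcol b, isPos (c z.1) := fun z => hy (.inl z)
  have hPair : ∀ (l : Lower b) (u : Upper b),
      isPos (c l.1 * absS (b u.1) + c u.1 * absS (b l.1)) := by
    intro l u
    have h0 := hy (.inr (l, u))
    have he : (∑ i, y i * elimA B b i (.inr (l, u)))
        = c l.1 * absS (b u.1) + c u.1 * absS (b l.1) := by
      simp only [elimA, mul_add, Finset.sum_add_distrib, hc]
      simp_rw [← mul_assoc]
      rw [← Finset.sum_mul, ← Finset.sum_mul]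
    rwa [he] at h0
  have hPair' : ∀ (l : Lower b) (u : Upper b),
      lo (c l.1) (valS (b l.1)) < -(lo (c u.1) (valS (b u.1))) := by
    intro l u
    have hp := hPair l u
    rw [isU_absS u.2, isL_absS l.2] at hp
    exact pair_lt _ _ _ _ hp
  have hBalPos : ∀ (j : J), isL (b j) → isU (b j) → isPos (c j) := by
    intro j hl hu
    have hp := hPair ⟨j, hl⟩ ⟨j, hu⟩
    rw [isL_absS hl] at hp
    exact self_pos hp
  set S : Finset ℝ := Finset.univ.image (fun l : Lower b => lo (c l.1) (valS (b l.1))) with hS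
  set T : Finset ℝ := Finset.univ.image (fun u : Upper b => -(lo (c u.1) (valS (b u.1)))) with hT
  have hST : ∀ s ∈ S, ∀ t ∈ T, s < t := by
    intro s hs t ht
    obtain ⟨l, -, rfl⟩ := Finset.mem_image.mp hs
    obtain ⟨u, -, rfl⟩ := Finset.mem_image.mp ht
    exact hPair' l u
  obtain ⟨m, hSm, hmT⟩ : ∃ m : ℝ, (∀ s ∈ S, s < m) ∧ (∀ t ∈ T, m < t) := by
    by_cases hS' : S.Nonempty
    · by_cases hT' : T.Nonempty
      · refine ⟨(S.max' hS' + T.min' hT') / 2, fun s hs => ?_, fun t ht => ?_⟩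
        · have h1 := Finset.le_max' S s hs
          have h2 : S.max' hS' < T.min' hT' := by
            rw [Finset.max'_lt_iff]
            intro s' hs'
            rw [Finset.lt_min'_iff]
            intro t' ht'
            exact hST s' hs' t' ht'
          linarith
        · have h1 := Finset.min'_le T t ht
          have h2 : S.max' hS' < T.min' hT' := by
            rw [Finset.max'_lt_iff]
            intro s' hs'
            rw [Finset.lt_min'_iff]
            intro t' ht'
            exact hST s' hs' t' ht'
          linarith
      · refine ⟨S.max' hS' + 1, fun s hs => ?_, fun t ht => absurd ⟨t, ht⟩ hT'⟩
        have := Finset.le_max' S s hs; linarith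
    · by_cases hT' : T.Nonempty
      · refine ⟨T.min' hT' - 1, fun s hs => absurd ⟨s, hs⟩ hS', fun t ht => ?_⟩
        have := Finset.min'_le T t ht; linarith
      · exact ⟨0, fun s hs => absurd ⟨s, hs⟩ hS', fun t ht => absurd ⟨t, ht⟩ hT'⟩
  have hSm' : ∀ l : Lower b, lo (c l.1) (valS (b l.1)) < m :=
    fun l => hSm _ (Finset.mem_image_of_mem _ (Finset.mem_univ l))
  have hmT' : ∀ u : Upper b, m < -(lo (c u.1) (valS (b u.1))) :=
    fun u => hmT _ (Finset.mem_image_of_mem _ (Finset.mem_univ u))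
  refine ⟨y, phi m, hysgn, isSigned_phi m, ?_⟩
  intro j
  show isPos (c j + phi m * b j)
  cases hbj : b j with
  | zero =>
    rw [mul_def, mul_zero', ← zero_def, add_zero]
    exact hZ ⟨j, by rw [hbj]; rfl⟩
  | elem s β =>
    cases s with
    | pos =>
      have hl : isL (b j) := by rw [hbj]; trivial
      have hlt := hSm' ⟨j, hl⟩
      rw [hbj] at hlt
      exact feasL (c j) β (phi m) (isSigned_phi m) (by rw [psi_phi]; exact hlt)
    | neg =>
      have hu : isU (b j) := by rw [hbj]; trivial
      have hlt := hmT' ⟨j, hu⟩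
      rw [hbj] at hlt
      exact feasR (c j) β (phi m) (isSigned_phi m) (by rw [psi_phi]; exact hlt)
    | bal =>
      have hl : isL (b j) := by rw [hbj]; trivial
      have hu : isU (b j) := by rw [hbj]; trivial
      have hlt1 := hSm' ⟨j, hl⟩
      have hlt2 := hmT' ⟨j, hu⟩
      rw [hbj] at hlt1 hlt2
      refine feasB (c j) β (phi m) (isSigned_phi m) (hBalPos j hl hu) ?_ ?_
      · rw [psi_phi]; exact hlt1
      · rw [psi_phi]; exact hlt2


lemma NNK_elim (B : Fin d → J → STrop) (b : J → STrop) (h : NNK (elimA B b)) :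
    ∃ x : J → STrop, (∀ j, nneg (x j)) ∧ (∃ j, x j ≠ 0) ∧
      (∀ i, balZero (∑ j, B i j * x j)) ∧ balZero (∑ j, b j * x j) := by
  classical
  obtain ⟨x'', hxn, ⟨m0, hm0⟩, hxb⟩ := h
  set x : J → STrop := fun j =>
    (if h : b j = 0 then x'' (.inl ⟨j, h⟩) else 0)
    + (if h : isL (b j) then ∑ u : Upper b, x'' (.inr (⟨j, h⟩, u)) * absS (b u.1) else 0)
    + (if h : isU (b j) then ∑ l : Lower b, x'' (.inr (l, ⟨j, h⟩)) * absS (b l.1) else 0)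
    with hxdef
  have key : ∀ w : J → STrop, ∑ j, w j * x j
      = (∑ z : Zcol b, w z.1 * x'' (.inl z))
      + ∑ l : Lower b, ∑ u : Upper b,
          (w l.1 * absS (b u.1) + w u.1 * absS (b l.1)) * x'' (.inr (l, u)) := by
    intro w
    have e1 : ∑ j, w j * x j
        = (∑ j, w j * (if h : b j = 0 then x'' (.inl ⟨j, h⟩) else 0))
        + ((∑ j, w j * (if h : isL (b j) then
              ∑ u : Upper b, x'' (.inr (⟨j, h⟩, u)) * absS (b u.1) else 0))
        + (∑ j, w j * (if h : isU (b j) then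
              ∑ l : Lower b, x'' (.inr (l, ⟨j, h⟩)) * absS (b l.1) else 0))) := by
      simp only [hxdef, mul_add, Finset.sum_add_distrib, add_assoc]
    rw [e1]
    have p1 : (∑ j, w j * (if h : b j = 0 then x'' (.inl ⟨j, h⟩) else 0))
        = ∑ z : Zcol b, w z.1 * x'' (.inl z) := by
      simp_rw [mul_dite, mul_zero]
      exact sum_dite_subtype (fun j => b j = 0) (fun j h => w j * x'' (.inl ⟨j, h⟩))
    have p2 : (∑ j, w j * (if h : isL (b j) then
          ∑ u : Upper b, x'' (.inr (⟨j, h⟩, u)) * absS (b u.1) else 0))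
        = ∑ l : Lower b, ∑ u : Upper b, w l.1 * (x'' (.inr (l, u)) * absS (b u.1)) := by
      simp_rw [mul_dite, mul_zero]
      rw [sum_dite_subtype (fun j => isL (b j))
        (fun j h => w j * ∑ u : Upper b, x'' (.inr (⟨j, h⟩, u)) * absS (b u.1))]
      exact Finset.sum_congr rfl (fun l _ => by rw [Finset.mul_sum])
    have p3 : (∑ j, w j * (if h : isU (b j) then
          ∑ l : Lower b, x'' (.inr (l, ⟨j, h⟩)) * absS (b l.1) else 0))
        = ∑ l : Lower b, ∑ u : Upper b, w u.1 * (x'' (.inr (l, u)) * absS (b l.1)) := by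
      simp_rw [mul_dite, mul_zero]
      rw [sum_dite_subtype (fun j => isU (b j))
        (fun j h => w j * ∑ l : Lower b, x'' (.inr (l, ⟨j, h⟩)) * absS (b l.1))]
      rw [Finset.sum_comm]
      exact Finset.sum_congr rfl (fun l _ => by rw [Finset.mul_sum])
    rw [p1, p2, p3, ← Finset.sum_add_distrib]
    congr 1
    refine Finset.sum_congr rfl (fun l _ => ?_)
    rw [← Finset.sum_add_distrib]
    refine Finset.sum_congr rfl (fun u _ => ?_)
    ring
  refine ⟨x, ?_, ?_, ?_, ?_⟩
  · intro j
    simp only [hxdef]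
    refine nneg_add (nneg_add ?_ ?_) ?_
    · split_ifs with h
      · exact hxn _
      · trivial
    · split_ifs with h
      · exact nneg_sum (fun u => nneg_mul (hxn _) (nneg_absS _))
      · trivial
    · split_ifs with h
      · exact nneg_sum (fun l => nneg_mul (hxn _) (nneg_absS _))
      · trivial
  · cases m0 with
    | inl z =>
      refine ⟨z.1, fun h0 => ?_⟩
      simp only [hxdef] at h0
      obtain ⟨h2, -⟩ := add_eq_zero_iff.mp (add_eq_zero_iff.mp h0).1
      rw [dif_pos z.2] at h2
      exact hm0 h2
    | inr lu =>
      obtain ⟨l, u⟩ := lu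
      refine ⟨l.1, fun h0 => ?_⟩
      simp only [hxdef] at h0
      have h2 := (add_eq_zero_iff.mp (add_eq_zero_iff.mp h0).1).2
      rw [dif_pos l.2] at h2
      have h3 := sum_eq_zero_forall h2 u
      exact mul_ne_zero' hm0 (absS_ne_zero (isU_ne_zero u.2)) h3
  · intro i
    rw [key (B i)]
    have hx := hxb i
    have esum : (∑ m : EIdx b, elimA B b i m * x'' m)
        = (∑ z : Zcol b, B i z.1 * x'' (.inl z))
        + ∑ lu : Lower b × Upper b, elimA B b i (.inr lu) * x'' (.inr lu) :=
      Fintype.sum_sum_type _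
    have eprod : (∑ lu : Lower b × Upper b, elimA B b i (.inr lu) * x'' (.inr lu))
        = ∑ l : Lower b, ∑ u : Upper b, elimA B b i (.inr (l, u)) * x'' (.inr (l, u)) :=
      Fintype.sum_prod_type _
    rw [esum, eprod] at hx
    exact hx
  · rw [key b]
    refine balZero_add ?_ ?_
    · have : (∑ z : Zcol b, b z.1 * x'' (.inl z)) = 0 :=
        Finset.sum_eq_zero (fun z _ => by rw [z.2, zero_mul])
      rw [this]; trivial
    · refine balZero_sum (fun l => balZero_sum (fun u => ?_))
      rw [mul_comm]
      exact balZero_mul (balZero_LU l.2 u.2)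

end elimstep

theorem NNK_or_SEP : ∀ (d : ℕ) (J : Type) [Fintype J] (A : Fin d → J → STrop), NNK A ∨ SEP A := by
  intro d
  induction d with
  | zero =>
    intro J _ A
    by_cases hJ : Nonempty J
    · left
      exact ⟨fun _ => 1, fun _ => trivial, ⟨hJ.some, fun h => STrop.noConfusion h⟩,
        fun i => i.elim0⟩
    · right
      exact ⟨fun i => i.elim0, fun i => i.elim0, fun j => absurd ⟨j⟩ hJ⟩
  | succ d ih =>
    intro J _ A
    classical
    set B : Fin d → J → STrop := fun i j => A i.castSucc j with hB
    set b : J → STrop := fun j => A (Fin.last d) j with hb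
    rcases ih (EIdx b) (elimA B b) with hN | hS
    · left
      obtain ⟨x, h1, h2, h3, h4⟩ := NNK_elim B b hN
      refine ⟨x, h1, h2, ?_⟩
      intro i
      refine Fin.lastCases ?_ ?_ i
      · exact h4
      · intro i'
        exact h3 i'
    · right
      obtain ⟨y, z, hy1, hz1, hfeas⟩ := SEP_elim B b hS
      refine ⟨Fin.snoc y z, ?_, ?_⟩
      · intro i
        refine Fin.lastCases ?_ ?_ i
        · rw [Fin.snoc_last]; exact hz1
        · intro i'; rw [Fin.snoc_castSucc]; exact hy1 i'
      · intro j
        have hf := hfeas j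
        rw [Fin.sum_univ_castSucc]
        simp only [Fin.snoc_castSucc, Fin.snoc_last]
        exact hf

end STrop

/-- Farkas' lemma for signed tropical numbers: exactly one of
nnker(A) and sep(A) is nonempty. -/
theorem tropical_farkas (d n : ℕ) (A : Fin d → Fin n → STrop)
    (hA : ∀ i j, STrop.isSigned (A i j)) :
    Xor' (STrop.nnker A).Nonempty (STrop.sep A).Nonempty := by
  classical
  have hker : (STrop.nnker A).Nonempty ↔ STrop.NNK A := by
    constructor
    · rintro ⟨x, h1, h2, h3⟩
      refine ⟨x, h1, Function.ne_iff.mp h2, fun i => ?_⟩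
      have h3' := h3 i
      show STrop.balZero (∑ j, A i j * x j)
      rwa [show STrop.mv A x i = STrop.sumFin fun j => STrop.mul (A i j) (x j) from rfl,
        STrop.sumFin_eq] at h3'
    · rintro ⟨x, h1, h2, h3⟩
      refine ⟨x, h1, Function.ne_iff.mpr h2, fun i => ?_⟩
      show STrop.balZero (STrop.sumFin fun j => STrop.mul (A i j) (x j))
      rw [STrop.sumFin_eq]
      exact h3 i
  have hsep : (STrop.sep A).Nonempty ↔ STrop.SEP A := by
    constructor
    · rintro ⟨y, h1, h2⟩
      refine ⟨y, h1, fun j => ?_⟩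
      have h2' := h2 j
      rwa [STrop.sumFin_eq] at h2'
    · rintro ⟨y, h1, h2⟩
      refine ⟨y, h1, fun j => ?_⟩
      show STrop.isPos (STrop.sumFin fun i => STrop.mul (y i) (A i j))
      rw [STrop.sumFin_eq]
      exact h2 j
  have hexcl := STrop.not_NNK_and_SEP A
  rcases STrop.NNK_or_SEP d (Fin n) A with hN | hS
  · exact Or.inl ⟨hker.mpr hN, fun hs => hexcl hN (hsep.mp hs)⟩
  · exact Or.inr ⟨hsep.mpr hS, fun hn => hexcl (hker.mp hn) hS⟩
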